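/- For every prime p and integer n ≥ 1, any Kakeya set S ⊆ F_p^n satisfies |S| ≥ binom(p+n-2, n-1). -/

import Mathlib

open MvPolynomial Polynomial

/-- helper: finsupp degree is the sum of values. -/
private lemma kakeya_deg_aux {σ : Type*} (s : σ →₀ ℕ) :
    s.degree = s.sum fun _ e => e := rfl

/-- helper: product over a finsupp-exponent vector as a multiset product. -/
private lemma kakeya_prod_pow_multiset {ι M : Type*} [DecidableEq ι] [Fintype ι] [CommMonoid M]
    (g : ι → M) (s : ι →₀ ℕ) :
    (s.toMultiset.map g).prod = ∏ i, g i ^ s i := by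
  rw [Finsupp.toMultiset_map, Finsupp.prod_toMultiset,
    Finsupp.prod_mapDomain_index (fun b => pow_zero _) (fun b m₁ m₂ => pow_add _ _ _)]
  exact Finsupp.prod_fintype _ _ fun i => pow_zero _

/-- helper: top coefficient of a product of powers of (at most) linear polynomials. -/
private lemma kakeya_coeff_prod_pow {F : Type*} [CommRing F] {n : ℕ}
    (f : Fin n → F[X]) (hf : ∀ i, (f i).natDegree ≤ 1) (s : Fin n →₀ ℕ) :
    (∏ i, f i ^ s i).coeff (s.sum fun _ e => e) = ∏ i, (f i).coeff 1 ^ s i := by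
  classical
  rw [← kakeya_prod_pow_multiset f s, ← kakeya_prod_pow_multiset (fun i => (f i).coeff 1) s]
  have hcard : Multiset.card (s.toMultiset.map f) = s.sum fun _ e => e := by
    rw [Multiset.card_map, Finsupp.card_toMultiset]; rfl
  have h := Polynomial.coeff_multiset_prod_of_natDegree_le (s.toMultiset.map f) 1 ?_
  · rw [hcard, mul_one] at h
    rw [h, Multiset.map_map]
    rfl
  · intro q hq
    obtain ⟨i, -, rfl⟩ := Multiset.mem_map.mp hq
    exact hf i

/-- helper: evaluation at a point as a linear map. -/
private noncomputable def kakeyaEvalL {n p : ℕ} (x : Fin n → ZMod p) :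
    MvPolynomial (Fin n) (ZMod p) →ₗ[ZMod p] ZMod p where
  toFun := MvPolynomial.eval x
  map_add' := fun a b => map_add _ a b
  map_smul' := fun r q => by simp [MvPolynomial.smul_eval x q r]

@[simp] private lemma kakeyaEvalL_apply {n p : ℕ} (x : Fin n → ZMod p)
    (q : MvPolynomial (Fin n) (ZMod p)) : kakeyaEvalL x q = MvPolynomial.eval x q := rfl

/-- Every Kakeya set in `F_p^n` has size at least `binom(p+n-2, n-1)`. -/
theorem kakeya_card_ge_choose
    {p n : ℕ} [Fact p.Prime] (hn : 1 ≤ n) (S : Finset (Fin n → ZMod p))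
    (hS : ∀ b : Fin n → ZMod p, b ≠ 0 →
      ∃ a : Fin n → ZMod p, ∀ t : ZMod p, a + t • b ∈ S) :
    Nat.choose (p + n - 2) (n - 1) ≤ S.card := by
  classical
  by_contra hlt
  push_neg at hlt
  have hp2 : 2 ≤ p := (Fact.out : p.Prime).two_le
  have hκcard : Fintype.card (Sym (Fin n) (p - 1)) = (p + n - 2).choose (n - 1) := by
    rw [Sym.card_sym_eq_choose, Fintype.card_fin]
    have h1 : n + (p - 1) - 1 = p + n - 2 := by omega
    rw [h1, ← Nat.choose_symm (show p - 1 ≤ p + n - 2 by omega)]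
    congr 1
    omega
  -- injection into exponent vectors
  set idx : Sym (Fin n) (p - 1) → (Fin n →₀ ℕ) :=
    fun m => Multiset.toFinsupp (m : Multiset (Fin n)) with hidx
  have hidx_inj : Function.Injective idx := by
    intro m m' hmm
    exact Subtype.ext (Multiset.toFinsupp.injective hmm)
  have hidx_sum : ∀ m : Sym (Fin n) (p - 1), ((idx m).sum fun _ e => e) = p - 1 := by
    intro m
    have h2 : Multiset.card ((idx m).toMultiset) = p - 1 := by
      rw [hidx, Multiset.toFinsupp_toMultiset]
      exact m.2
    calc ((idx m).sum fun _ e => e) = Multiset.card ((idx m).toMultiset) :=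
          (Finsupp.card_toMultiset _).symm
    _ = p - 1 := h2
  -- the coefficient-to-polynomial linear map
  set Φ : (Sym (Fin n) (p - 1) → ZMod p) →ₗ[ZMod p] MvPolynomial (Fin n) (ZMod p) :=
    ∑ m : Sym (Fin n) (p - 1), (MvPolynomial.monomial (idx m)).comp (LinearMap.proj m) with hΦ
  have hΦ_apply : ∀ c : Sym (Fin n) (p - 1) → ZMod p,
      Φ c = ∑ m : Sym (Fin n) (p - 1), MvPolynomial.monomial (idx m) (c m) := by
    intro c
    rw [hΦ, LinearMap.sum_apply]
    rfl
  have hΦcoeff : ∀ (c : Sym (Fin n) (p - 1) → ZMod p) (m0 : Sym (Fin n) (p - 1)),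
      MvPolynomial.coeff (idx m0) (Φ c) = c m0 := by
    intro c m0
    rw [hΦ_apply, MvPolynomial.coeff_sum]
    rw [Finset.sum_eq_single m0]
    · simp [MvPolynomial.coeff_monomial]
    · intro m _ hm
      rw [MvPolynomial.coeff_monomial, if_neg (fun h => hm (hidx_inj h))]
    · simp
  set L : (Sym (Fin n) (p - 1) → ZMod p) →ₗ[ZMod p] (↥S → ZMod p) :=
    LinearMap.pi (fun x : ↥S => (kakeyaEvalL x.1).comp Φ) with hL
  -- L is not injective by dimension count
  have hnotinj : ¬ Function.Injective L := by
    intro hinj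
    have hle := LinearMap.finrank_le_finrank_of_injective hinj
    rw [Module.finrank_fintype_fun_eq_card, Module.finrank_fintype_fun_eq_card,
      Fintype.card_coe, hκcard] at hle
    omega
  rw [← LinearMap.ker_eq_bot] at hnotinj
  obtain ⟨c, hcker, hc0⟩ := Submodule.ne_bot_iff _ |>.mp hnotinj
  set g := Φ c with hg
  have hgS : ∀ x ∈ S, MvPolynomial.eval x g = 0 := by
    intro x hx
    have := congrFun (LinearMap.mem_ker.mp hcker) ⟨x, hx⟩
    simpa [hL, LinearMap.pi_apply] using this
  have hg0 : g ≠ 0 := by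
    obtain ⟨m0, hm0⟩ := Function.ne_iff.mp hc0
    intro h
    apply hm0
    have := hΦcoeff c m0
    rw [← hg, h] at this
    simpa using this.symm
  have hgdeg : g.totalDegree ≤ p - 1 := by
    rw [hg, hΦ_apply]
    refine (MvPolynomial.totalDegree_finset_sum _ _).trans (Finset.sup_le fun m _ => ?_)
    exact (MvPolynomial.totalDegree_monomial_le _ _).trans (le_of_eq (hidx_sum m))
  set d := g.totalDegree with hd
  set h := MvPolynomial.homogeneousComponent d g with hh
  have hsub : h.support ⊆ g.support := by
    intro s hs
    have hcs := MvPolynomial.mem_support_iff.mp hs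
    rw [hh, MvPolynomial.coeff_homogeneousComponent] at hcs
    by_cases hcond : s.degree = d
    · rw [if_pos hcond] at hcs
      exact MvPolynomial.mem_support_iff.mpr hcs
    · rw [if_neg hcond] at hcs
      exact absurd rfl hcs
  -- h is nonzero
  have hh0 : h ≠ 0 := by
    obtain ⟨s, hsmem, hsval⟩ :=
      Finset.exists_mem_eq_sup g.support (MvPolynomial.support_nonempty.mpr hg0)
        (fun s => s.sum fun _ e => e)
    intro hcon
    have hcs : MvPolynomial.coeff s h = MvPolynomial.coeff s g := by
      rw [hh, MvPolynomial.coeff_homogeneousComponent, if_pos]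
      rw [kakeya_deg_aux, ← hsval]
      rfl
    rw [hcon] at hcs
    exact (MvPolynomial.mem_support_iff.mp hsmem) hcs.symm
  -- the key vanishing claim for nonzero directions
  have key : ∀ b : Fin n → ZMod p, b ≠ 0 → MvPolynomial.eval b h = 0 := by
    intro b hb
    obtain ⟨a, ha⟩ := hS b hb
    set f : Fin n → (ZMod p)[X] :=
      fun i => Polynomial.C (b i) * Polynomial.X + Polynomial.C (a i) with hf
    have hf1 : ∀ i, (f i).natDegree ≤ 1 := fun i => Polynomial.natDegree_linear_le
    set P : (ZMod p)[X] := MvPolynomial.eval₂ Polynomial.C f g with hP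
    have hterm_deg : ∀ s : Fin n →₀ ℕ,
        (Polynomial.C (MvPolynomial.coeff s g) * ∏ i, f i ^ s i).natDegree
          ≤ s.sum fun _ e => e := by
      intro s
      refine (Polynomial.natDegree_mul_le).trans ?_
      rw [Polynomial.natDegree_C, zero_add]
      refine (Polynomial.natDegree_prod_le _ _).trans ?_
      have hle : ∀ i : Fin n, (f i ^ s i).natDegree ≤ s i := fun i =>
        Polynomial.natDegree_pow_le.trans (by
          calc s i * (f i).natDegree ≤ s i * 1 := Nat.mul_le_mul_left _ (hf1 i)
          _ = s i := Nat.mul_one _)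
      refine (Finset.sum_le_sum fun i _ => hle i).trans ?_
      rw [Finsupp.sum_fintype _ _ (fun _ => rfl)]
    have hPform : P = ∑ s ∈ g.support,
        Polynomial.C (MvPolynomial.coeff s g) * ∏ i, f i ^ s i := by
      rw [hP, MvPolynomial.eval₂_eq']
    have hPdeg : P.natDegree ≤ d := by
      rw [hPform]
      refine Polynomial.natDegree_sum_le_of_forall_le _ _ fun s hs => ?_
      exact (hterm_deg s).trans (MvPolynomial.le_totalDegree hs)
    have hPeval : ∀ t : ZMod p, P.eval t = 0 := by
      intro t
      have hcomp := MvPolynomial.eval₂_comp_left (Polynomial.evalRingHom t) Polynomial.C f g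
      have h1 : (Polynomial.evalRingHom t).comp Polynomial.C = RingHom.id (ZMod p) := by
        ext r; simp
      have h2 : (Polynomial.evalRingHom t) ∘ f = fun i => a i + t * b i := by
        funext i; simp [hf]; ring
      rw [h1, h2] at hcomp
      have h3 : MvPolynomial.eval₂ (RingHom.id (ZMod p)) (fun i => a i + t * b i) g
          = MvPolynomial.eval (a + t • b) g := by
        have hpt : (a + t • b) = fun i => a i + t * b i := by
          funext i; simp [Pi.add_apply, Pi.smul_apply, smul_eq_mul]
        rw [hpt]
        rfl
      have h4 : P.eval t = MvPolynomial.eval (a + t • b) g := by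
        rw [hP, ← h3, ← hcomp]
        rfl
      rw [h4]
      exact hgS _ (ha t)
    have hP0 : P = 0 := by
      refine Polynomial.eq_zero_of_natDegree_lt_card_of_eval_eq_zero P
        Function.injective_id (fun t => hPeval t) ?_
      have hcardF : Fintype.card (ZMod p) = p := ZMod.card p
      rw [hcardF]
      omega
    have hhform : MvPolynomial.eval b h = ∑ s ∈ g.support,
        (if s.degree = d then MvPolynomial.coeff s g else 0) * ∏ i, b i ^ s i := by
      rw [MvPolynomial.eval_eq']
      rw [Finset.sum_subset hsub (fun s _ hs => by
        rw [MvPolynomial.notMem_support_iff.mp hs, zero_mul])]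
      refine Finset.sum_congr rfl fun s _ => ?_
      rw [hh, MvPolynomial.coeff_homogeneousComponent]
    have hcoeff : P.coeff d = MvPolynomial.eval b h := by
      rw [hPform, Polynomial.finset_sum_coeff, hhform]
      refine Finset.sum_congr rfl fun s hs => ?_
      by_cases hsd : s.degree = d
      · rw [if_pos hsd, Polynomial.coeff_C_mul]
        have hsum : (s.sum fun _ e => e) = d := by rw [← kakeya_deg_aux]; exact hsd
        rw [← hsum, kakeya_coeff_prod_pow f hf1 s]
        congr 1
        refine Finset.prod_congr rfl fun i _ => ?_
        congr 1
        simp [hf, Polynomial.coeff_C]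
      · rw [if_neg hsd, zero_mul]
        have hne : (s.sum fun _ e => e) ≠ d := by rw [← kakeya_deg_aux]; exact hsd
        exact Polynomial.coeff_eq_zero_of_natDegree_lt
          (lt_of_le_of_lt (hterm_deg s)
            (lt_of_le_of_ne (MvPolynomial.le_totalDegree hs) hne))
    rw [hP0] at hcoeff
    simpa using hcoeff.symm
  -- a nonzero direction exists
  have hb1 : ((Pi.single (⟨0, hn⟩ : Fin n) (1 : ZMod p) : Fin n → ZMod p)) ≠ 0 := by
    intro hcon
    have := congrFun hcon ⟨0, hn⟩
    simp at this
  -- h vanishes everywhere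
  have hall : ∀ b : Fin n → ZMod p, MvPolynomial.eval b h = 0 := by
    intro b
    by_cases hb : b = 0
    · subst hb
      by_cases hd0 : d = 0
      · have hhc : h = MvPolynomial.C (MvPolynomial.coeff 0 g) := by
          rw [hh, hd0, MvPolynomial.homogeneousComponent_zero]
        have hkey := key _ hb1
        rw [hhc] at hkey ⊢
        simpa using hkey
      · rw [MvPolynomial.eval_eq]
        refine Finset.sum_eq_zero fun s hs => ?_
        by_cases hs0 : s = 0
        · subst hs0
          have hc0h : MvPolynomial.coeff 0 h = 0 := by
            rw [hh, MvPolynomial.coeff_homogeneousComponent, if_neg]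
            rw [kakeya_deg_aux, Finsupp.sum_zero_index]
            exact fun hcon => hd0 hcon.symm
          rw [hc0h, zero_mul]
        · obtain ⟨i, hi⟩ := Finsupp.ne_iff.mp hs0
          simp only [Finsupp.coe_zero, Pi.zero_apply] at hi
          have hisupp : i ∈ s.support := Finsupp.mem_support_iff.mpr hi
          rw [Finset.prod_eq_zero hisupp, mul_zero]
          simp only [Pi.zero_apply]
          exact zero_pow hi
    · exact key b hb
  -- h has degree ≤ p - 1 in each variable
  have hmem : h ∈ MvPolynomial.restrictDegree (Fin n) (ZMod p)
      (Fintype.card (ZMod p) - 1) := by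
    rw [MvPolynomial.mem_restrictDegree]
    intro s hsup i
    have hcoeff : MvPolynomial.coeff s h ≠ 0 := MvPolynomial.mem_support_iff.mp hsup
    have hsd : s.degree = d := by
      by_contra hcon
      apply hcoeff
      rw [hh, MvPolynomial.coeff_homogeneousComponent, if_neg hcon]
    have hsile : s i ≤ s.degree := by
      by_cases hi : i ∈ s.support
      · exact Finset.single_le_sum (fun j _ => Nat.zero_le _) hi
      · rw [Finsupp.notMem_support_iff.mp hi]
        exact Nat.zero_le _
    have hcardF : Fintype.card (ZMod p) = p := ZMod.card p
    rw [hcardF]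
    omega
  have hzero : h = 0 := MvPolynomial.eq_zero_of_eval_eq_zero (Fin n) (ZMod p) h hall hmem
  exact hh0 hzero
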